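/- The labeled convolution of the functions n ↦ C(n,a₁)·b₁^(n−a₁) and n ↦ C(n,a₂)·b₂^(n−a₂) equals n ↦ C(a₁+a₂,a₁)·C(n,a₁+a₂)·(b₁+b₂)^(n−(a₁+a₂)). -/

import Mathlib

private lemma sum_shift_aux (F : ℕ → ℤ) (a m n : ℕ) (h : a + m ≤ n)
    (hz : ∀ i, i < a ∨ a + m < i → F i = 0) :
    ∑ i ∈ Finset.range (n + 1), F i = ∑ j ∈ Finset.range (m + 1), F (a + j) := by
  rw [show m + 1 = a + m + 1 - a by omega, ← Finset.sum_Ico_eq_sum_range]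
  refine (Finset.sum_subset ?_ ?_).symm
  · intro i hi
    rw [Finset.mem_Ico] at hi
    rw [Finset.mem_range]
    omega
  · intro i hi hi'
    rw [Finset.mem_range] at hi
    rw [Finset.mem_Ico] at hi'
    exact hz i (by omega)

/-- The labeled convolution of `n ↦ C(n,a₁)·b₁^(n−a₁)` and
`n ↦ C(n,a₂)·b₂^(n−a₂)` equals `n ↦ C(a₁+a₂,a₁)·C(n,a₁+a₂)·(b₁+b₂)^(n−(a₁+a₂))`. -/
theorem labeled_convolution_binomial_exponential (a₁ a₂ b₁ b₂ : ℕ) (n : ℕ) :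
    ∑ i ∈ Finset.range (n + 1),
        (n.choose i : ℤ) * ((i.choose a₁ : ℤ) * (b₁ : ℤ) ^ (i - a₁)) *
          (((n - i).choose a₂ : ℤ) * (b₂ : ℤ) ^ ((n - i) - a₂)) =
      ((a₁ + a₂).choose a₁ : ℤ) * (n.choose (a₁ + a₂) : ℤ) *
        ((b₁ : ℤ) + (b₂ : ℤ)) ^ (n - (a₁ + a₂)) := by
  rcases lt_or_ge n (a₁ + a₂) with hn | hn
  · rw [Nat.choose_eq_zero_of_lt hn]
    rw [Finset.sum_eq_zero, Int.natCast_zero, mul_zero, zero_mul]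
    intro i hi
    rw [Finset.mem_range] at hi
    rcases lt_or_ge i a₁ with h1 | h1
    · rw [Nat.choose_eq_zero_of_lt h1]; push_cast; ring
    · have h2 : n - i < a₂ := by omega
      rw [Nat.choose_eq_zero_of_lt h2]; push_cast; ring
  · obtain ⟨m, rfl⟩ : ∃ m, n = a₁ + a₂ + m := ⟨n - (a₁ + a₂), by omega⟩
    set n := a₁ + a₂ + m with hn_def
    have key : ∀ j ∈ Finset.range (m + 1),
        (n.choose (a₁ + j) : ℤ) * (((a₁ + j).choose a₁ : ℤ) * (b₁ : ℤ) ^ ((a₁ + j) - a₁)) *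
          (((n - (a₁ + j)).choose a₂ : ℤ) * (b₂ : ℤ) ^ ((n - (a₁ + j)) - a₂)) =
        ((n.choose a₁ : ℤ) * ((a₂ + m).choose a₂ : ℤ)) *
          ((b₁ : ℤ) ^ j * (b₂ : ℤ) ^ (m - j) * ((m.choose j : ℤ))) := by
      intro j hj
      rw [Finset.mem_range] at hj
      have hjm : j ≤ m := by omega
      have e1 : (a₁ + j) - a₁ = j := by omega
      have e2 : n - (a₁ + j) = a₂ + (m - j) := by omega
      have e3 : (a₂ + (m - j)) - a₂ = m - j := by omega
      rw [e1, e2, e3]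
      have hA : n.choose (a₁ + j) * (a₁ + j).choose a₁ = n.choose a₁ * (a₂ + m).choose j := by
        rw [Nat.choose_mul (by omega)]
        congr 2 <;> omega
      have hB : (a₂ + m).choose j * (a₂ + (m - j)).choose a₂ =
          (a₂ + m).choose a₂ * m.choose j := by
        have hsym : (a₂ + m).choose j = (a₂ + m).choose (a₂ + (m - j)) := by
          rw [show a₂ + (m - j) = (a₂ + m) - j by omega, Nat.choose_symm (by omega)]
        rw [hsym, Nat.choose_mul (by omega),
          show a₂ + m - a₂ = m by omega, show a₂ + (m - j) - a₂ = m - j by omega,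
          Nat.choose_symm hjm]
      have hAB : (n.choose (a₁ + j) * (a₁ + j).choose a₁) * (a₂ + (m - j)).choose a₂ =
          (n.choose a₁ * (a₂ + m).choose a₂) * m.choose j := by
        rw [hA, mul_assoc, hB, ← mul_assoc, mul_assoc]
      have := congrArg (fun x : ℕ => (x : ℤ)) hAB
      push_cast at this ⊢
      linear_combination ((b₁ : ℤ) ^ j * (b₂ : ℤ) ^ (m - j)) * this
    have hsum : ∑ i ∈ Finset.range (n + 1),
        (n.choose i : ℤ) * ((i.choose a₁ : ℤ) * (b₁ : ℤ) ^ (i - a₁)) *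
          (((n - i).choose a₂ : ℤ) * (b₂ : ℤ) ^ ((n - i) - a₂)) =
        ∑ j ∈ Finset.range (m + 1),
        (n.choose (a₁ + j) : ℤ) * (((a₁ + j).choose a₁ : ℤ) * (b₁ : ℤ) ^ ((a₁ + j) - a₁)) *
          (((n - (a₁ + j)).choose a₂ : ℤ) * (b₂ : ℤ) ^ ((n - (a₁ + j)) - a₂)) := by
      refine sum_shift_aux _ a₁ m n (by omega) ?_
      intro i hi
      rcases lt_or_ge n i with h0 | h0
      · rw [Nat.choose_eq_zero_of_lt h0]; push_cast; ring
      rcases lt_or_ge i a₁ with h1 | h1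
      · rw [Nat.choose_eq_zero_of_lt h1]; push_cast; ring
      · have h2 : n - i < a₂ := by omega
        rw [Nat.choose_eq_zero_of_lt h2]; push_cast; ring
    rw [hsum, Finset.sum_congr rfl key, ← Finset.mul_sum, ← add_pow]
    have hfin : (n.choose a₁ : ℤ) * ((a₂ + m).choose a₂ : ℤ) =
        ((a₁ + a₂).choose a₁ : ℤ) * (n.choose (a₁ + a₂) : ℤ) := by
      have := Nat.choose_mul (n := n) (k := a₁ + a₂) (s := a₁) (by omega)
      rw [show (a₁ + a₂) - a₁ = a₂ by omega, show n - a₁ = a₂ + m by omega] at this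
      have := congrArg (fun x : ℕ => (x : ℤ)) this
      push_cast at this
      linarith
    rw [hfin, show n - (a₁ + a₂) = m by omega]
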